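/- Let X be a locally compact, Hausdorff, connected space. (I) Every quasi-linear functional ρ on C_c(X) with ‖ρ‖ < ∞ extends uniquely to a quasi-linear functional on C₀(X), and the extension has the same norm. (II) Conversely, every quasi-linear functional on C₀(X) with ‖ρ‖ < ∞ is the unique such extension of its restriction to C_c(X). -/

import Mathlib

open Set Filter Topology MeasureTheory
open scoped ENNReal BoundedContinuousFunction

universe u

/-- A topological measure on `X`: a set function on subsets of `X` (only its values on open
and closed sets matter), not identically `∞` on open/closed sets, satisfying (TM1)–(TM3). -/
structure TopMeasure (X : Type u) [TopologicalSpace X] where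
  toFun : Set X → ℝ≥0∞
  not_all_top : ∃ A : Set X, (IsOpen A ∨ IsClosed A) ∧ toFun A ≠ ∞
  tm1 : ∀ A B : Set X, Disjoint A B → (IsOpen A ∨ IsCompact A) → (IsOpen B ∨ IsCompact B) →
      (IsOpen (A ∪ B) ∨ IsCompact (A ∪ B)) → toFun (A ∪ B) = toFun A + toFun B
  tm2 : ∀ U : Set X, IsOpen U → toFun U = ⨆ K ∈ {K : Set X | IsCompact K ∧ K ⊆ U}, toFun K
  tm3 : ∀ F : Set X, IsClosed F → toFun F = ⨅ U ∈ {U : Set X | IsOpen U ∧ F ⊆ U}, toFun U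

/-- `μ` is compact-finite. -/
def TopMeasure.CompactFinite {X : Type u} [TopologicalSpace X] (μ : TopMeasure X) : Prop :=
  ∀ K : Set X, IsCompact K → μ.toFun K ≠ ∞

/-- The set of compactly supported continuous functions, inside `C_b(X)`. -/
def CcS (X : Type u) [TopologicalSpace X] : Set (X →ᵇ ℝ) :=
  {f | HasCompactSupport (f : X → ℝ)}

/-- The set of continuous functions vanishing at infinity, inside `C_b(X)`. -/
def C0S (X : Type u) [TopologicalSpace X] : Set (X →ᵇ ℝ) :=
  {f | Tendsto (f : X → ℝ) (cocompact X) (nhds 0)}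

/-- `𝔅` is a (non-unital) subalgebra of `C_b(X)`. -/
def IsSubalgS {X : Type u} [TopologicalSpace X] (𝔅 : Set (X →ᵇ ℝ)) : Prop :=
  (∀ f g : X →ᵇ ℝ, f ∈ 𝔅 → g ∈ 𝔅 → f + g ∈ 𝔅) ∧
  (∀ f g : X →ᵇ ℝ, f ∈ 𝔅 → g ∈ 𝔅 → f * g ∈ 𝔅) ∧
  (∀ (c : ℝ) (f : X →ᵇ ℝ), f ∈ 𝔅 → c • f ∈ 𝔅)

/-- The singly generated subalgebra `B(h)`: the smallest closed (in `𝔅`) subalgebra of `𝔅`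
containing `h`. -/
def sgen {X : Type u} [TopologicalSpace X] (𝔅 : Set (X →ᵇ ℝ)) (h : X →ᵇ ℝ) :
    Set (X →ᵇ ℝ) :=
  ⋂₀ {S : Set (X →ᵇ ℝ) | S ⊆ 𝔅 ∧ h ∈ S ∧
      (∀ f g : X →ᵇ ℝ, f ∈ S → g ∈ S → f + g ∈ S) ∧
      (∀ f g : X →ᵇ ℝ, f ∈ S → g ∈ S → f * g ∈ S) ∧
      (∀ (c : ℝ) (f : X →ᵇ ℝ), f ∈ S → c • f ∈ S) ∧
      IsClosed {x : ↥𝔅 | (x : X →ᵇ ℝ) ∈ S}}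

/-- A signed quasi-linear functional on `𝔅` (QI1), (QI2). -/
structure SignedQLF {X : Type u} [TopologicalSpace X] (𝔅 : Set (X →ᵇ ℝ)) where
  toFun : (X →ᵇ ℝ) → ℝ
  smul_eq : ∀ (a : ℝ) (f : X →ᵇ ℝ), f ∈ 𝔅 → toFun (a • f) = a * toFun f
  add_eq : ∀ h ∈ 𝔅, ∀ f g : X →ᵇ ℝ, f ∈ sgen 𝔅 h → g ∈ sgen 𝔅 h →
      toFun (f + g) = toFun f + toFun g

/-- A (positive) quasi-linear functional on `𝔅` (QI1)–(QI3). -/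
structure QLF {X : Type u} [TopologicalSpace X] (𝔅 : Set (X →ᵇ ℝ)) extends SignedQLF 𝔅 where
  pos : ∀ f : X →ᵇ ℝ, f ∈ 𝔅 → 0 ≤ f → 0 ≤ toFun f

/-- `‖ρ‖ = sup {ρ(f) : f ∈ 𝔅, 0 ≤ f ≤ 1}`, as an extended real number. -/
noncomputable def qnorm {X : Type u} [TopologicalSpace X] {𝔅 : Set (X →ᵇ ℝ)} (ρ : QLF 𝔅) :
    ℝ≥0∞ :=
  ⨆ f ∈ {f : X →ᵇ ℝ | f ∈ 𝔅 ∧ 0 ≤ f ∧ f ≤ 1}, ENNReal.ofReal (ρ.toFun f)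

/-- `m` is the measure `m_f` on `ℝ` associated with a finite topological measure `μ` and
`f ∈ C₀(X)` (case (A)): `m(W) = μ(f⁻¹(W))` for every open `W ⊆ ℝ`. -/
def IsMfA {X : Type u} [TopologicalSpace X] (μ : TopMeasure X) (f : X →ᵇ ℝ)
    (m : Measure ℝ) : Prop :=
  ∀ W : Set ℝ, IsOpen W → m W = μ.toFun ((f : X → ℝ) ⁻¹' W)

/-- `m` is the measure `m_f` on `ℝ` associated with a compact-finite topological measure `μ`
and `f ∈ C_c(X)` (case (B)): `m(W) = μ(f⁻¹(W \ {0}))` for every open `W ⊆ ℝ`. -/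
def IsMfB {X : Type u} [TopologicalSpace X] (μ : TopMeasure X) (f : X →ᵇ ℝ)
    (m : Measure ℝ) : Prop :=
  ∀ W : Set ℝ, IsOpen W → m W = μ.toFun ((f : X → ℝ) ⁻¹' (W \ {0}))

/-- The support of a (Borel) measure on `ℝ`. -/
def msupp (m : Measure ℝ) : Set ℝ := {x : ℝ | ∀ U ∈ nhds x, 0 < m U}

/-- The set function `μ_ρ` on open sets:
`μ_ρ(U) = sup {ρ(f) : f ∈ C_c(X), 0 ≤ f ≤ 1, supp f ⊆ U}`. -/
noncomputable def muO {X : Type u} [TopologicalSpace X] {𝔅 : Set (X →ᵇ ℝ)} (ρ : QLF 𝔅)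
    (U : Set X) : ℝ≥0∞ :=
  ⨆ f ∈ {f : X →ᵇ ℝ | f ∈ CcS X ∧ 0 ≤ f ∧ f ≤ 1 ∧ tsupport (f : X → ℝ) ⊆ U},
    ENNReal.ofReal (ρ.toFun f)

/-- The set function `μ_ρ` on closed sets: `μ_ρ(F) = inf {μ_ρ(U) : U open, F ⊆ U}`. -/
noncomputable def muC {X : Type u} [TopologicalSpace X] {𝔅 : Set (X →ᵇ ℝ)} (ρ : QLF 𝔅)
    (F : Set X) : ℝ≥0∞ :=
  ⨅ U ∈ {U : Set X | IsOpen U ∧ F ⊆ U}, muO ρ U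

open Classical in
/-- The set function `μ_ρ`. -/
noncomputable def muR {X : Type u} [TopologicalSpace X] {𝔅 : Set (X →ᵇ ℝ)} (ρ : QLF 𝔅) :
    Set X → ℝ≥0∞ :=
  fun A => if IsOpen A then muO ρ A else muC ρ A

/-- `ρ = ρ_μ` on `C₀(X)` (case (A)): for every `f ∈ C₀(X)` and every measure `m_f`
associated with `μ` and `f`, `ρ(f) = ∫_ℝ id dm_f`. -/
def ReprA {X : Type u} [TopologicalSpace X] {𝔅 : Set (X →ᵇ ℝ)} (μ : TopMeasure X)
    (ρ : QLF 𝔅) : Prop :=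
  ∀ f ∈ C0S X, ∀ m : Measure ℝ, IsMfA μ f m → ρ.toFun f = ∫ t, t ∂m

/-- `ρ = ρ_μ` on `C_c(X)` (case (B)). -/
def ReprB {X : Type u} [TopologicalSpace X] {𝔅 : Set (X →ᵇ ℝ)} (μ : TopMeasure X)
    (ρ : QLF 𝔅) : Prop :=
  ∀ f ∈ CcS X, ∀ m : Measure ℝ, IsMfB μ f m → ρ.toFun f = ∫ t, t ∂m


namespace QLFExtAux

open BoundedContinuousFunction

variable {X : Type u} [TopologicalSpace X]

variable {X : Type u} [TopologicalSpace X]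


def clamp (ε t : ℝ) : ℝ := max (min t ε) (-ε)
def tr (ε t : ℝ) : ℝ := t - clamp ε t

lemma tr_zero {ε : ℝ} (hε : 0 ≤ ε) : tr ε 0 = 0 := by
  simp [tr, clamp, max_def, min_def]; split_ifs <;> linarith

lemma abs_tr_sub_self {ε : ℝ} (hε : 0 ≤ ε) (t : ℝ) : |tr ε t - t| ≤ ε := by
  simp only [tr, clamp, max_def, min_def]
  split_ifs <;> rw [abs_le] <;> constructor <;> linarith

lemma tr_eq_zero {ε t : ℝ} (h : |t| ≤ ε) : tr ε t = 0 := by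
  rw [abs_le] at h
  simp only [tr, clamp, max_def, min_def]
  split_ifs <;> linarith

lemma abs_tr_sub_tr (a b t : ℝ) : |tr a t - tr b t| ≤ |a - b| := by
  simp only [tr, clamp, max_def, min_def]
  split_ifs <;> rw [abs_le] <;> constructor <;> simp -failIfUnchanged only [neg_le, neg_sub] at * <;>
    first
    | linarith [le_abs_self (a - b), neg_abs_le (a - b)]
    | linarith [le_abs_self (a - b), neg_abs_le (a - b), abs_nonneg (a-b)]

lemma tr_tr {ε δ : ℝ} (hε : 0 ≤ ε) (hδ : 0 ≤ δ) (t : ℝ) :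
    tr ε (tr δ t) = tr (ε + δ) t := by
  simp only [tr, clamp, max_def, min_def]
  split_ifs <;> linarith

lemma tr_nonneg {ε t : ℝ} (hε : 0 ≤ ε) (ht : 0 ≤ t) : 0 ≤ tr ε t := by
  simp only [tr, clamp, max_def, min_def]; split_ifs <;> linarith

lemma tr_le_self {ε t : ℝ} (hε : 0 ≤ ε) (ht : 0 ≤ t) : tr ε t ≤ t := by
  simp only [tr, clamp, max_def, min_def]; split_ifs <;> linarith

lemma tr_of_ge {ε t : ℝ} (hε : 0 ≤ ε) (h : ε ≤ t) : tr ε t = t - ε := by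
  simp only [tr, clamp, max_def, min_def]; split_ifs <;> linarith

lemma tr_of_le {ε t : ℝ} (hε : 0 ≤ ε) (h : t ≤ -ε) : tr ε t = t + ε := by
  simp only [tr, clamp, max_def, min_def]; split_ifs <;> linarith

lemma tr_lipschitz (ε : ℝ) : LipschitzWith 2 (tr ε) := by
  apply LipschitzWith.of_dist_le_mul
  intro s t
  simp only [Real.dist_eq, tr]
  have h1 : |clamp ε s - clamp ε t| ≤ |s - t| := by
    refine (abs_max_sub_max_le_max _ _ _ _).trans ?_
    simp only [sub_self, abs_zero]
    refine max_le ((abs_min_sub_min_le_max _ _ _ _).trans ?_) (by positivity)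
    simp
  calc |s - clamp ε s - (t - clamp ε t)| ≤ |s - t| + |clamp ε s - clamp ε t| := by
        rw [show s - clamp ε s - (t - clamp ε t) = (s - t) - (clamp ε s - clamp ε t) by ring]
        exact abs_sub _ _
    _ ≤ 2 * dist s t := by rw [Real.dist_eq]; push_cast; linarith



section BCF

lemma bcf_le_iff {f g : X →ᵇ ℝ} : f ≤ g ↔ ∀ x, f x ≤ g x := Iff.rfl

lemma bcf_norm_le {f : X →ᵇ ℝ} {C : ℝ} (hC : 0 ≤ C) (h : ∀ x, |f x| ≤ C) : ‖f‖ ≤ C :=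
  (BoundedContinuousFunction.norm_le hC).mpr (by simpa using h)

lemma bcf_abs_le_norm (f : X →ᵇ ℝ) (x : X) : |f x| ≤ ‖f‖ := by
  simpa using f.norm_coe_le_norm x

end BCF

section Mem

lemma zero_mem_CcS : (0 : X →ᵇ ℝ) ∈ CcS X := by
  show HasCompactSupport _
  simp only [BoundedContinuousFunction.coe_zero]
  rw [HasCompactSupport]
  simp [tsupport]

lemma mem_CcS_comp {φ : ℝ → ℝ} (h0 : φ 0 = 0) {f v : X →ᵇ ℝ} (hf : f ∈ CcS X)
    (hv : ⇑v = φ ∘ ⇑f) : v ∈ CcS X := by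
  show HasCompactSupport _
  rw [hv]
  exact hf.comp_left h0

lemma mem_C0S_comp {φ : ℝ → ℝ} (hφ : Continuous φ) (h0 : φ 0 = 0) {f v : X →ᵇ ℝ}
    (hf : f ∈ C0S X) (hv : ⇑v = φ ∘ ⇑f) : v ∈ C0S X := by
  show Tendsto _ _ _
  rw [hv]
  have := (hφ.tendsto 0).comp hf
  rwa [h0] at this

lemma CcS_subset_C0S : CcS X ⊆ C0S X := by
  intro f hf
  show Tendsto _ _ _
  have h1 : (tsupport ⇑f)ᶜ ∈ cocompact X := by
    rw [mem_cocompact]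
    exact ⟨tsupport ⇑f, hf, le_refl _⟩
  have h2 : ⇑f =ᶠ[cocompact X] (fun _ => (0:ℝ)) := by
    filter_upwards [h1] with x hx
    exact image_eq_zero_of_notMem_tsupport hx
  exact Tendsto.congr' h2.symm tendsto_const_nhds

lemma isSubalg_CcS : IsSubalgS (CcS X) := by
  refine ⟨fun f g hf hg => ?_, fun f g hf hg => ?_, fun c f hf => ?_⟩
  · show HasCompactSupport _
    rw [BoundedContinuousFunction.coe_add]
    exact hf.add hg
  · show HasCompactSupport _
    rw [BoundedContinuousFunction.coe_mul]
    exact hg.mul_left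
  · exact mem_CcS_comp (φ := fun t => c * t) (by simp) hf rfl

lemma isSubalg_C0S : IsSubalgS (C0S X) := by
  refine ⟨fun f g hf hg => ?_, fun f g hf hg => ?_, fun c f hf => ?_⟩
  · show Tendsto _ _ _
    rw [BoundedContinuousFunction.coe_add]
    simpa [Pi.add_def] using (hf : Tendsto _ _ _).add (hg : Tendsto _ _ _)
  · show Tendsto _ _ _
    rw [BoundedContinuousFunction.coe_mul]
    have : ∀ x, ‖(⇑f * ⇑g) x‖ ≤ ‖f‖ * ‖g x‖ := by
      intro x
      simp only [Pi.mul_apply, norm_mul]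
      exact mul_le_mul_of_nonneg_right (f.norm_coe_le_norm x) (norm_nonneg _)
    apply squeeze_zero_norm this
    simpa using ((hg : Tendsto _ _ _).norm.const_mul ‖f‖)
  · exact mem_C0S_comp (φ := fun t => c * t) (by fun_prop) (by simp) hf rfl

end Mem

variable {𝔅 : Set (X →ᵇ ℝ)} {k : X →ᵇ ℝ}


/-- The defining family of `sgen`. -/
def sfam (𝔅 : Set (X →ᵇ ℝ)) (h : X →ᵇ ℝ) : Set (Set (X →ᵇ ℝ)) :=
  {S : Set (X →ᵇ ℝ) | S ⊆ 𝔅 ∧ h ∈ S ∧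
      (∀ f g : X →ᵇ ℝ, f ∈ S → g ∈ S → f + g ∈ S) ∧
      (∀ f g : X →ᵇ ℝ, f ∈ S → g ∈ S → f * g ∈ S) ∧
      (∀ (c : ℝ) (f : X →ᵇ ℝ), f ∈ S → c • f ∈ S) ∧
      IsClosed {x : ↥𝔅 | (x : X →ᵇ ℝ) ∈ S}}

lemma sgen_eq : sgen 𝔅 k = ⋂₀ sfam 𝔅 k := rfl

lemma sgen_subset_of_mem {S : Set (X →ᵇ ℝ)} (hS : S ∈ sfam 𝔅 k) : sgen 𝔅 k ⊆ S :=
  sInter_subset_of_mem hS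

lemma base_mem_sfam (hB : IsSubalgS 𝔅) (hk : k ∈ 𝔅) : 𝔅 ∈ sfam 𝔅 k := by
  refine ⟨le_refl _, hk, hB.1, hB.2.1, hB.2.2, ?_⟩
  have : {x : ↥𝔅 | (x : X →ᵇ ℝ) ∈ 𝔅} = univ := by
    ext x; simpa using x.2
  rw [this]; exact isClosed_univ

lemma sgen_subset (hB : IsSubalgS 𝔅) (hk : k ∈ 𝔅) : sgen 𝔅 k ⊆ 𝔅 :=
  sgen_subset_of_mem (base_mem_sfam hB hk)

lemma self_mem_sgen : k ∈ sgen 𝔅 k := by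
  rw [sgen_eq, mem_sInter]; exact fun S hS => hS.2.1

lemma sgen_add {f g : X →ᵇ ℝ} (hf : f ∈ sgen 𝔅 k) (hg : g ∈ sgen 𝔅 k) :
    f + g ∈ sgen 𝔅 k := by
  rw [sgen_eq, mem_sInter] at *
  exact fun S hS => hS.2.2.1 f g (hf S hS) (hg S hS)

lemma sgen_mul {f g : X →ᵇ ℝ} (hf : f ∈ sgen 𝔅 k) (hg : g ∈ sgen 𝔅 k) :
    f * g ∈ sgen 𝔅 k := by
  rw [sgen_eq, mem_sInter] at *
  exact fun S hS => hS.2.2.2.1 f g (hf S hS) (hg S hS)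

lemma sgen_smul (c : ℝ) {f : X →ᵇ ℝ} (hf : f ∈ sgen 𝔅 k) : c • f ∈ sgen 𝔅 k := by
  rw [sgen_eq, mem_sInter] at *
  exact fun S hS => hS.2.2.2.2.1 c f (hf S hS)

lemma sgen_isClosed : IsClosed {x : ↥𝔅 | (x : X →ᵇ ℝ) ∈ sgen 𝔅 k} := by
  have : {x : ↥𝔅 | (x : X →ᵇ ℝ) ∈ sgen 𝔅 k} =
      ⋂ S ∈ sfam 𝔅 k, {x : ↥𝔅 | (x : X →ᵇ ℝ) ∈ S} := by
    ext x; simp [sgen_eq, mem_sInter]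
  rw [this]
  exact isClosed_biInter fun S hS => hS.2.2.2.2.2

lemma sgen_mem_sfam (hB : IsSubalgS 𝔅) (hk : k ∈ 𝔅) : sgen 𝔅 k ∈ sfam 𝔅 k :=
  ⟨sgen_subset hB hk, self_mem_sgen, fun _ _ => sgen_add, fun _ _ => sgen_mul,
    fun c f hf => sgen_smul c hf, sgen_isClosed⟩

lemma sgen_sub_mem {f g : X →ᵇ ℝ} (hf : f ∈ sgen 𝔅 k) (hg : g ∈ sgen 𝔅 k) :
    f - g ∈ sgen 𝔅 k := by
  rw [sub_eq_add_neg, ← neg_one_smul ℝ g]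
  exact sgen_add hf (sgen_smul _ hg)

lemma sgen_mono_gen {k' : X →ᵇ ℝ} (hB : IsSubalgS 𝔅) (hk : k ∈ 𝔅)
    (hk' : k' ∈ sgen 𝔅 k) : sgen 𝔅 k' ⊆ sgen 𝔅 k := by
  apply sgen_subset_of_mem
  exact ⟨sgen_subset hB hk, hk', fun _ _ => sgen_add, fun _ _ => sgen_mul,
    fun c f hf => sgen_smul c hf, sgen_isClosed⟩


open Polynomial in
lemma sgen_mul_aeval (hB : IsSubalgS 𝔅) (hk : k ∈ 𝔅) {u : X →ᵇ ℝ}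
    (hu : u ∈ sgen 𝔅 k) (p : ℝ[X]) : u * (Polynomial.aeval u p) ∈ sgen 𝔅 k := by
  induction p using Polynomial.induction_on' with
  | add p q hp hq =>
      rw [map_add, mul_add]
      exact sgen_add hp hq
  | monomial n a =>
      rw [Polynomial.aeval_monomial]
      have hpow : ∀ m : ℕ, u ^ (m + 1) ∈ sgen 𝔅 k := by
        intro m
        induction m with
        | zero => simpa using hu
        | succ j hj => rw [pow_succ]; exact sgen_mul hj hu
      have : u * (algebraMap ℝ (X →ᵇ ℝ) a * u ^ n) = a • u ^ (n + 1) := by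
        ext x
        simp [BoundedContinuousFunction.algebraMap_apply, pow_succ]
        ring
      rw [this]
      exact sgen_smul a (hpow n)

open Polynomial in
lemma sgen_aeval (hB : IsSubalgS 𝔅) (hk : k ∈ 𝔅) {u : X →ᵇ ℝ}
    (hu : u ∈ sgen 𝔅 k) {p : ℝ[X]} (hp : p.coeff 0 = 0) :
    (Polynomial.aeval u p) ∈ sgen 𝔅 k := by
  obtain ⟨q, rfl⟩ := Polynomial.X_dvd_iff.mpr hp
  rw [map_mul, Polynomial.aeval_X]
  exact sgen_mul_aeval hB hk hu q

lemma aeval_apply (u : X →ᵇ ℝ) (p : Polynomial ℝ) (x : X) :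
    (Polynomial.aeval u p) x = p.eval (u x) := by
  induction p using Polynomial.induction_on' with
  | add p q hp hq => simp [hp, hq]
  | monomial n a => simp [Polynomial.aeval_monomial, Algebra.smul_def]

lemma two_div_tendsto : Tendsto (fun n : ℕ => 2/((n:ℝ)+1)) atTop (𝓝 0) := by
  have h2 := tendsto_one_div_add_atTop_nhds_zero_nat.const_mul (2:ℝ)
  simpa [div_eq_mul_inv, mul_comm] using h2

/-- (M2): compositions `θ ∘ u` with `θ(0) = 0` stay in the singly generated subalgebra. -/
lemma comp_mem_sgen (hB : IsSubalgS 𝔅) (hk : k ∈ 𝔅) {u v : X →ᵇ ℝ}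
    (hu : u ∈ sgen 𝔅 k) {θ : ℝ → ℝ} (hθ : Continuous θ) (h0 : θ 0 = 0)
    (hv : v ∈ 𝔅) (hvu : ⇑v = θ ∘ ⇑u) : v ∈ sgen 𝔅 k := by
  have hR : (0:ℝ) ≤ ‖u‖ := norm_nonneg u
  have happrox : ∀ n : ℕ, ∃ w : X →ᵇ ℝ, w ∈ sgen 𝔅 k ∧ ‖w - v‖ ≤ 2/((n:ℝ)+1) := by
    intro n
    have hpos : (0:ℝ) < 1/((n:ℝ)+1) := by positivity
    obtain ⟨p, hp⟩ := exists_polynomial_near_of_continuousOn (-‖u‖) ‖u‖ θ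
      hθ.continuousOn _ hpos
    set q : Polynomial ℝ := p - Polynomial.C (p.eval 0) with hq
    have hq0 : q.coeff 0 = 0 := by
      simp [hq, Polynomial.coeff_zero_eq_eval_zero]
    refine ⟨Polynomial.aeval u q, sgen_aeval hB hk hu hq0, ?_⟩
    have h0mem : (0:ℝ) ∈ Set.Icc (-‖u‖) ‖u‖ := by constructor <;> linarith
    apply (BoundedContinuousFunction.norm_le (by positivity)).mpr
    intro x
    have hx : u x ∈ Set.Icc (-‖u‖) ‖u‖ := by
      have := u.norm_coe_le_norm x
      rw [Real.norm_eq_abs, abs_le] at this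
      exact this
    have h1 := hp (u x) hx
    have h2 := hp 0 h0mem
    rw [h0] at h2
    have : ((Polynomial.aeval u q - v) : X →ᵇ ℝ) x = q.eval (u x) - θ (u x) := by
      simp [aeval_apply, hvu]
    rw [Real.norm_eq_abs, this, hq]
    simp only [Polynomial.eval_sub, Polynomial.eval_C]
    have : p.eval (u x) - p.eval 0 - θ (u x)
        = (p.eval (u x) - θ (u x)) - (p.eval 0 - 0) := by ring
    rw [this]
    calc |p.eval (u x) - θ (u x) - (p.eval 0 - 0)|
        ≤ |p.eval (u x) - θ (u x)| + |p.eval 0 - 0| := abs_sub _ _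
      _ ≤ 1/((n:ℝ)+1) + 1/((n:ℝ)+1) := add_le_add h1.le h2.le
      _ = 2/((n:ℝ)+1) := by ring
  choose w hw1 hw2 using happrox
  have hwmem : ∀ n, w n ∈ 𝔅 := fun n => sgen_subset hB hk (hw1 n)
  have htend : Tendsto (fun n => w n) atTop (𝓝 v) := by
    rw [tendsto_iff_dist_tendsto_zero]
    exact squeeze_zero (fun n => dist_nonneg) (fun n => by rw [dist_eq_norm]; exact hw2 n)
      two_div_tendsto
  have htend' : Tendsto (fun n => (⟨w n, hwmem n⟩ : ↥𝔅)) atTop (𝓝 ⟨v, hv⟩) := by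
    rw [IsEmbedding.subtypeVal.tendsto_nhds_iff]
    exact htend
  exact sgen_isClosed.mem_of_tendsto htend' (Filter.Eventually.of_forall fun n => hw1 n)


section TrB

/-- Bundled truncation `τ_ε ∘ f`. -/
noncomputable def trB (ε : ℝ) (f : X →ᵇ ℝ) : X →ᵇ ℝ :=
  BoundedContinuousFunction.comp (tr ε) (tr_lipschitz ε) f

@[simp] lemma trB_apply (ε : ℝ) (f : X →ᵇ ℝ) (x : X) : trB ε f x = tr ε (f x) := rfl

lemma mem_CcS_of_small {f : X →ᵇ ℝ} (hf : f ∈ C0S X) {ε : ℝ} (hε : 0 < ε) (v : X →ᵇ ℝ)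
    (hv : ∀ x, |f x| ≤ ε → v x = 0) : v ∈ CcS X := by
  have hev : ∀ᶠ x in cocompact X, dist (f x) 0 < ε := Metric.tendsto_nhds.mp hf ε hε
  rw [Filter.eventually_iff, mem_cocompact] at hev
  obtain ⟨K, hK, hKsub⟩ := hev
  have hclosed : IsClosed {x : X | ε ≤ |f x|} :=
    isClosed_le continuous_const (f.continuous.abs)
  have hsub : {x : X | ε ≤ |f x|} ⊆ K := by
    intro x hx
    by_contra hxK
    have := hKsub hxK
    simp only [mem_setOf_eq, Real.dist_eq, sub_zero] at this hx
    linarith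
  show HasCompactSupport _
  have h1 : tsupport ⇑v ⊆ {x : X | ε ≤ |f x|} := by
    apply closure_minimal _ hclosed
    intro x hx
    by_contra hxs
    simp only [mem_setOf_eq, not_le] at hxs
    exact hx (hv x hxs.le)
  exact IsCompact.of_isClosed_subset hK (isClosed_tsupport _) (h1.trans hsub)

lemma trB_mem_CcS {f : X →ᵇ ℝ} (hf : f ∈ C0S X) {ε : ℝ} (hε : 0 < ε) :
    trB ε f ∈ CcS X :=
  mem_CcS_of_small hf hε _ (fun _ hx => tr_eq_zero hx)

lemma trB_mem_CcS_of_CcS {f : X →ᵇ ℝ} (hf : f ∈ CcS X) {ε : ℝ} (hε : 0 ≤ ε) :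
    trB ε f ∈ CcS X :=
  mem_CcS_comp (tr_zero hε) hf rfl

lemma trB_mem_C0S {f : X →ᵇ ℝ} (hf : f ∈ C0S X) {ε : ℝ} (hε : 0 ≤ ε) :
    trB ε f ∈ C0S X :=
  mem_C0S_comp (tr_lipschitz ε).continuous (tr_zero hε) hf rfl

lemma norm_trB_sub_self {f : X →ᵇ ℝ} {ε : ℝ} (hε : 0 ≤ ε) : ‖trB ε f - f‖ ≤ ε := by
  apply bcf_norm_le hε
  intro x
  simpa using abs_tr_sub_self hε (f x)

lemma norm_trB_sub_trB {f : X →ᵇ ℝ} (a b : ℝ) : ‖trB a f - trB b f‖ ≤ |a - b| := by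
  apply bcf_norm_le (abs_nonneg _)
  intro x
  simpa using abs_tr_sub_tr a b (f x)

end TrB

section Cut

/-- The plateau cutoff function: `0` on `[-δ,δ]`, `1` outside `(-2δ,2δ)`. -/
noncomputable def cut (δ t : ℝ) : ℝ := δ⁻¹ * (tr δ |t| - tr (2*δ) |t|)

/-- Bundled plateau cutoff `cut δ ∘ f`. -/
noncomputable def cutB (δ : ℝ) (f : X →ᵇ ℝ) : X →ᵇ ℝ :=
  δ⁻¹ • (trB δ |f| - trB (2*δ) |f|)

@[simp] lemma cutB_apply (δ : ℝ) (f : X →ᵇ ℝ) (x : X) : cutB δ f x = cut δ (f x) := by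
  simp [cutB, cut]

lemma cut_continuous (δ : ℝ) : Continuous (cut δ) := by
  unfold cut
  exact continuous_const.mul
    (((tr_lipschitz δ).continuous.comp continuous_abs).sub
      ((tr_lipschitz (2*δ)).continuous.comp continuous_abs))

lemma tr_abs_eval {δ : ℝ} (hδ : 0 ≤ δ) (t : ℝ) :
    tr δ |t| = if |t| ≤ δ then 0 else |t| - δ := by
  split_ifs with h
  · exact tr_eq_zero (by rwa [abs_abs])
  · exact tr_of_ge hδ (by linarith [not_le.mp h])

lemma cut_nonneg {δ : ℝ} (hδ : 0 < δ) (t : ℝ) : 0 ≤ cut δ t := by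
  unfold cut
  rw [tr_abs_eval hδ.le, tr_abs_eval (by linarith)]
  have := abs_nonneg t
  split_ifs <;> (try push_neg at *) <;> (apply mul_nonneg (by positivity); linarith)

lemma cut_le_one {δ : ℝ} (hδ : 0 < δ) (t : ℝ) : cut δ t ≤ 1 := by
  unfold cut
  rw [tr_abs_eval hδ.le, tr_abs_eval (by linarith)]
  have := abs_nonneg t
  split_ifs <;> (try push_neg at *) <;>
    (rw [← inv_mul_cancel₀ hδ.ne']; exact mul_le_mul_of_nonneg_left (by linarith) (by positivity))

lemma cut_eq_zero {δ t : ℝ} (hδ : 0 < δ) (h : |t| ≤ δ) : cut δ t = 0 := by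
  unfold cut
  rw [tr_abs_eval hδ.le, tr_abs_eval (by linarith)]
  rw [if_pos h, if_pos (by linarith)]
  simp

lemma cut_eq_one {δ t : ℝ} (hδ : 0 < δ) (h : 2*δ ≤ |t|) : cut δ t = 1 := by
  unfold cut
  rw [tr_abs_eval hδ.le, tr_abs_eval (by linarith), if_neg (by push_neg; linarith)]
  by_cases h2 : |t| ≤ 2*δ
  · rw [if_pos h2]
    have ht : |t| = 2*δ := le_antisymm h2 h
    have e : |t| - δ - 0 = δ := by rw [ht]; ring
    rw [e, inv_mul_cancel₀ hδ.ne']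
  · rw [if_neg h2]
    have e : |t| - δ - (|t| - 2*δ) = δ := by ring
    rw [e, inv_mul_cancel₀ hδ.ne']

lemma cut_zero {δ : ℝ} (hδ : 0 < δ) : cut δ 0 = 0 := cut_eq_zero hδ (by simp [hδ.le])

lemma cutB_mem_CcS {h : X →ᵇ ℝ} (hh : h ∈ C0S X) {δ : ℝ} (hδ : 0 < δ) :
    cutB δ h ∈ CcS X :=
  mem_CcS_of_small hh hδ _ (fun x hx => by rw [cutB_apply]; exact cut_eq_zero hδ hx)

end Cut

section Vanish

/-- (M3): a function of `h` vanishing on `[-δ, δ]` lies in the subalgebra of `C_c`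
generated by the truncation `τ_{δ'} ∘ h`, for any `0 < δ' ≤ δ`. -/
lemma vanish_mem_sgen {h : X →ᵇ ℝ} (hh : h ∈ C0S X) {δ δ' : ℝ} (hδ' : 0 < δ')
    (hδ : δ' ≤ δ) {φ : ℝ → ℝ} (hφ : Continuous φ) (hvan : ∀ t, |t| ≤ δ → φ t = 0)
    {v : X →ᵇ ℝ} (hv : v ∈ CcS X) (hveq : ∀ x, v x = φ (h x)) :
    v ∈ sgen (CcS X) (trB δ' h) := by
  have hd1 : φ δ' = 0 := hvan δ' (by rw [abs_of_nonneg hδ'.le]; exact hδ)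
  have hd2 : φ (-δ') = 0 := hvan (-δ') (by rw [abs_neg, abs_of_nonneg hδ'.le]; exact hδ)
  set θ : ℝ → ℝ := fun s => if 0 ≤ s then φ (s + δ') else φ (s - δ') with hθdef
  have hθcont : Continuous θ := by
    apply Continuous.if_le (hφ.comp (by continuity)) (hφ.comp (by continuity))
      continuous_const continuous_id
    intro s hs
    subst hs
    simp [hd1, hd2]
  have hθ0 : θ 0 = 0 := by simp [hθdef, hd1]
  have hid : ∀ t, θ (tr δ' t) = φ t := by
    intro t
    rcases le_total t (-δ') with h1 | h1
    · rw [tr_of_le hδ'.le h1]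
      by_cases h0 : 0 ≤ t + δ'
      · have he : t + δ' = 0 := le_antisymm (by linarith) h0
        have ht0 : φ t = 0 := by
          have : t = -δ' := by linarith
          rw [this, hd2]
        simp [hθdef, he, hd1, ht0]
      · simp only [hθdef, if_neg h0]
        congr 1
        ring
    · rcases le_total δ' t with h2 | h2
      · rw [tr_of_ge hδ'.le h2]
        have h0 : 0 ≤ t - δ' := by linarith
        simp only [hθdef, if_pos h0]
        congr 1
        ring
      · rw [tr_eq_zero (abs_le.mpr ⟨by linarith, h2⟩)]
        have ht0 : φ t = 0 := hvan t (abs_le.mpr ⟨by linarith, by linarith⟩)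
        simp only [hθdef, if_pos le_rfl, zero_add, hd1, ht0]
  exact comp_mem_sgen isSubalg_CcS (trB_mem_CcS hh hδ') self_mem_sgen hθcont hθ0 hv
    (funext fun x => by rw [hveq x, Function.comp_apply, trB_apply, hid])

lemma cutB_mem_sgen {h : X →ᵇ ℝ} (hh : h ∈ C0S X) {δ : ℝ} (hδ : 0 < δ) :
    cutB δ h ∈ sgen (CcS X) (trB δ h) :=
  vanish_mem_sgen hh hδ le_rfl (cut_continuous δ) (fun _ ht => cut_eq_zero hδ ht)
    (cutB_mem_CcS hh hδ) (fun x => cutB_apply δ h x)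

end Vanish

section Small

/-- (M4): an element of `B(h) ⊆ C₀(X)` is small wherever `h` is small. -/
lemma small_of_mem_sgen {h f : X →ᵇ ℝ} (hh : h ∈ C0S X) (hf : f ∈ sgen (C0S X) h) :
    ∀ ε > 0, ∃ δ > 0, ∀ x, |h x| ≤ δ → |f x| ≤ ε := by
  set S : Set (X →ᵇ ℝ) :=
    {g | g ∈ C0S X ∧ ∀ ε > 0, ∃ δ > 0, ∀ x, |h x| ≤ δ → |g x| ≤ ε} with hS
  have hmem : S ∈ sfam (C0S X) h := by
    refine ⟨fun g hg => hg.1,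
      ⟨hh, fun ε hε => ⟨ε, hε, fun x hx => hx⟩⟩, ?_, ?_, ?_, ?_⟩
    · rintro f g ⟨hf0, hf1⟩ ⟨hg0, hg1⟩
      refine ⟨isSubalg_C0S.1 f g hf0 hg0, fun ε hε => ?_⟩
      obtain ⟨δ1, hδ1, hb1⟩ := hf1 (ε/2) (by linarith)
      obtain ⟨δ2, hδ2, hb2⟩ := hg1 (ε/2) (by linarith)
      refine ⟨min δ1 δ2, lt_min hδ1 hδ2, fun x hx => ?_⟩
      have e : (f + g) x = f x + g x := rfl
      rw [e]
      calc |f x + g x| ≤ |f x| + |g x| := abs_add_le _ _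
        _ ≤ ε/2 + ε/2 := add_le_add (hb1 x (hx.trans (min_le_left _ _)))
            (hb2 x (hx.trans (min_le_right _ _)))
        _ = ε := by ring
    · rintro f g ⟨hf0, hf1⟩ ⟨hg0, hg1⟩
      refine ⟨isSubalg_C0S.2.1 f g hf0 hg0, fun ε hε => ?_⟩
      obtain ⟨δ2, hδ2, hb2⟩ := hg1 (ε/(‖f‖+1)) (by positivity)
      refine ⟨δ2, hδ2, fun x hx => ?_⟩
      have e : (f * g) x = f x * g x := rfl
      rw [e, abs_mul]
      have h1 : |f x| ≤ ‖f‖ := bcf_abs_le_norm f x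
      have h2 := hb2 x hx
      calc |f x| * |g x| ≤ (‖f‖+1) * (ε/(‖f‖+1)) :=
            mul_le_mul (by linarith) h2 (abs_nonneg _) (by positivity)
        _ = ε := by field_simp
    · rintro c f ⟨hf0, hf1⟩
      refine ⟨isSubalg_C0S.2.2 c f hf0, fun ε hε => ?_⟩
      obtain ⟨δ1, hδ1, hb1⟩ := hf1 (ε/(|c|+1)) (by positivity)
      refine ⟨δ1, hδ1, fun x hx => ?_⟩
      have e : (c • f) x = c * f x := rfl
      rw [e, abs_mul]
      have h2 := hb1 x hx
      calc |c| * |f x| ≤ (|c|+1) * (ε/(|c|+1)) :=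
            mul_le_mul (by linarith) h2 (abs_nonneg _) (by positivity)
        _ = ε := by field_simp
    · apply IsSeqClosed.isClosed
      rintro u p hu hup
      refine ⟨p.2, fun ε hε => ?_⟩
      obtain ⟨N, hN⟩ := (Metric.tendsto_atTop.mp hup (ε/2) (by linarith))
      have hdist : dist ((u N : X →ᵇ ℝ)) (p : X →ᵇ ℝ) < ε/2 := by
        have := hN N le_rfl
        rwa [Subtype.dist_eq] at this
      obtain ⟨δ, hδ, hb⟩ := (hu N).2 (ε/2) (by linarith)
      refine ⟨δ, hδ, fun x hx => ?_⟩
      have h1 : dist ((u N : X →ᵇ ℝ) x) ((p : X →ᵇ ℝ) x) ≤ dist ((u N : X →ᵇ ℝ)) (p : X →ᵇ ℝ) :=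
        BoundedContinuousFunction.dist_coe_le_dist x
      rw [Real.dist_eq] at h1
      have h2 := hb x hx
      calc |(p : X →ᵇ ℝ) x| = |(u N : X →ᵇ ℝ) x - ((u N : X →ᵇ ℝ) x - (p : X →ᵇ ℝ) x)| := by
            congr 1; ring
        _ ≤ |(u N : X →ᵇ ℝ) x| + |(u N : X →ᵇ ℝ) x - (p : X →ᵇ ℝ) x| := abs_sub _ _
        _ ≤ ε/2 + ε/2 := add_le_add h2 (by linarith)
        _ = ε := by ring
  intro ε hε
  exact (sgen_subset_of_mem hmem hf).2 ε hε

end Small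

section Mult

/-- multiplication by `h` preserves `sgen (CcS X) (trB δ h)`. -/
lemma gen_mul_mem {h : X →ᵇ ℝ} (hh : h ∈ C0S X) {δ : ℝ} (hδ : 0 < δ) :
    ∀ g ∈ sgen (CcS X) (trB δ h), h * g ∈ sgen (CcS X) (trB δ h) := by
  set tb := trB δ h with htb
  have htbCc : tb ∈ CcS X := trB_mem_CcS hh hδ
  set T : Set (X →ᵇ ℝ) :=
    {g | g ∈ sgen (CcS X) tb ∧ h * g ∈ sgen (CcS X) tb} with hT
  have hmem : T ∈ sfam (CcS X) tb := by
    refine ⟨fun g hg => sgen_subset isSubalg_CcS htbCc hg.1, ⟨self_mem_sgen, ?_⟩,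
      ?_, ?_, ?_, ?_⟩
    · -- h * tb ∈ sgen
      apply vanish_mem_sgen hh hδ le_rfl
        (φ := fun t => t * tr δ t) (by exact continuous_id.mul (tr_lipschitz δ).continuous)
        (fun t ht => by show t * tr δ t = 0; rw [tr_eq_zero ht, mul_zero])
      · show HasCompactSupport _
        rw [BoundedContinuousFunction.coe_mul]
        exact (htbCc : HasCompactSupport _).mul_left
      · intro x
        rfl
    · rintro f g ⟨hf1, hf2⟩ ⟨hg1, hg2⟩
      refine ⟨sgen_add hf1 hg1, ?_⟩
      rw [mul_add]
      exact sgen_add hf2 hg2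
    · rintro f g ⟨hf1, hf2⟩ ⟨hg1, hg2⟩
      refine ⟨sgen_mul hf1 hg1, ?_⟩
      rw [← mul_assoc]
      exact sgen_mul hf2 hg1
    · rintro c f ⟨hf1, hf2⟩
      refine ⟨sgen_smul c hf1, ?_⟩
      rw [mul_smul_comm]
      exact sgen_smul c hf2
    · -- closedness
      have hmap : ∀ x : ↥(CcS X), h * (x : X →ᵇ ℝ) ∈ CcS X := by
        intro x
        show HasCompactSupport _
        rw [BoundedContinuousFunction.coe_mul]
        exact (x.2 : HasCompactSupport _).mul_left
      set F : ↥(CcS X) → ↥(CcS X) := fun x => ⟨h * (x : X →ᵇ ℝ), hmap x⟩ with hF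
      have hFcont : Continuous F := by
        apply Continuous.subtype_mk
        exact continuous_const.mul continuous_subtype_val
      have : {x : ↥(CcS X) | (x : X →ᵇ ℝ) ∈ T} =
          {x : ↥(CcS X) | (x : X →ᵇ ℝ) ∈ sgen (CcS X) tb} ∩
          F ⁻¹' {x : ↥(CcS X) | (x : X →ᵇ ℝ) ∈ sgen (CcS X) tb} := by
        ext x
        simp [hT, hF]
      rw [this]
      exact sgen_isClosed.inter (sgen_isClosed.preimage hFcont)
  intro g hg
  exact (sgen_subset_of_mem hmem hg).2

/-- (M5): elements of `B_{C₀}(h)` are multipliers of `sgen (CcS X) (trB δ h)`. -/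
lemma mul_mem_sgen_tr {h : X →ᵇ ℝ} (hh : h ∈ C0S X) {δ : ℝ} (hδ : 0 < δ) :
    ∀ f ∈ sgen (C0S X) h, ∀ g ∈ sgen (CcS X) (trB δ h),
      f * g ∈ sgen (CcS X) (trB δ h) := by
  set tb := trB δ h with htb
  have htbCc : tb ∈ CcS X := trB_mem_CcS hh hδ
  set S : Set (X →ᵇ ℝ) :=
    {f | f ∈ C0S X ∧ ∀ g ∈ sgen (CcS X) tb, f * g ∈ sgen (CcS X) tb} with hS
  have hmem : S ∈ sfam (C0S X) h := by
    refine ⟨fun g hg => hg.1, ⟨hh, gen_mul_mem hh hδ⟩, ?_, ?_, ?_, ?_⟩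
    · rintro f g ⟨hf1, hf2⟩ ⟨hg1, hg2⟩
      refine ⟨isSubalg_C0S.1 f g hf1 hg1, fun u hu => ?_⟩
      rw [add_mul]
      exact sgen_add (hf2 u hu) (hg2 u hu)
    · rintro f g ⟨hf1, hf2⟩ ⟨hg1, hg2⟩
      refine ⟨isSubalg_C0S.2.1 f g hf1 hg1, fun u hu => ?_⟩
      rw [mul_assoc]
      exact hf2 _ (hg2 u hu)
    · rintro c f ⟨hf1, hf2⟩
      refine ⟨isSubalg_C0S.2.2 c f hf1, fun u hu => ?_⟩
      rw [smul_mul_assoc]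
      exact sgen_smul c (hf2 u hu)
    · have hmap : ∀ g : X →ᵇ ℝ, g ∈ sgen (CcS X) tb →
          ∀ x : ↥(C0S X), (x : X →ᵇ ℝ) * g ∈ CcS X := by
        intro g hg x
        show HasCompactSupport _
        rw [BoundedContinuousFunction.coe_mul]
        exact HasCompactSupport.mul_left (sgen_subset isSubalg_CcS htbCc hg)
      have : {x : ↥(C0S X) | (x : X →ᵇ ℝ) ∈ S} =
          ⋂ g ∈ sgen (CcS X) tb,
            (fun x : ↥(C0S X) => (⟨(x : X →ᵇ ℝ) * g, hmap g ‹_› x⟩ : ↥(CcS X))) ⁻¹'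
              {y : ↥(CcS X) | (y : X →ᵇ ℝ) ∈ sgen (CcS X) tb} := by
        ext x
        simp only [hS, mem_setOf_eq, mem_iInter, mem_preimage, x.2, true_and]
      rw [this]
      apply isClosed_iInter
      intro g
      apply isClosed_iInter
      intro hg
      apply sgen_isClosed.preimage
      apply Continuous.subtype_mk
      exact continuous_subtype_val.mul continuous_const
  intro f hf
  exact (sgen_subset_of_mem hmem hf).2

end Mult

section QLFBound

open scoped ENNReal

lemma abs_mem_CcS {w : X →ᵇ ℝ} (hw : w ∈ CcS X) : |w| ∈ CcS X :=
  mem_CcS_comp abs_zero hw (by funext x; simp)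

lemma abs_mem_C0S {w : X →ᵇ ℝ} (hw : w ∈ C0S X) : |w| ∈ C0S X :=
  mem_C0S_comp continuous_abs abs_zero hw (by funext x; simp)

lemma rho_zero (ρ : QLF 𝔅) (h0 : (0 : X →ᵇ ℝ) ∈ 𝔅) : ρ.toFun 0 = 0 := by
  have := ρ.smul_eq 0 0 h0
  rwa [zero_smul, zero_mul] at this

lemma rho_nonneg_le (ρ : QLF 𝔅) {M : ℝ} (hM0 : 0 ≤ M)
    (hM : ∀ f ∈ 𝔅, 0 ≤ f → f ≤ 1 → ρ.toFun f ≤ M) (hB : IsSubalgS 𝔅)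
    (h0 : (0 : X →ᵇ ℝ) ∈ 𝔅) {w : X →ᵇ ℝ} (hw : w ∈ 𝔅) (hpos : 0 ≤ w) :
    ρ.toFun w ≤ M * ‖w‖ := by
  by_cases hn : ‖w‖ = 0
  · have : w = 0 := norm_eq_zero.mp hn
    rw [this, rho_zero ρ h0]
    simp
  · have hn' : 0 < ‖w‖ := lt_of_le_of_ne (norm_nonneg w) (Ne.symm hn)
    set g : X →ᵇ ℝ := ‖w‖⁻¹ • w with hg
    have hgB : g ∈ 𝔅 := hB.2.2 _ w hw
    have hgx : ∀ x, g x = ‖w‖⁻¹ * w x := fun x => rfl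
    have hg0 : (0 : X →ᵇ ℝ) ≤ g := by
      rw [bcf_le_iff]
      intro x
      show (0 : X →ᵇ ℝ) x ≤ g x
      rw [BoundedContinuousFunction.coe_zero, hgx]
      simp only [Pi.zero_apply]
      have h1 : (0:ℝ) ≤ w x := by simpa using (bcf_le_iff.mp hpos) x
      positivity
    have hg1 : g ≤ 1 := by
      rw [bcf_le_iff]
      intro x
      show g x ≤ (1 : X →ᵇ ℝ) x
      rw [hgx, BoundedContinuousFunction.coe_one]
      simp only [Pi.one_apply]
      rw [inv_mul_le_iff₀ hn']
      have h1 : w x ≤ |w x| := le_abs_self _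
      have h2 := bcf_abs_le_norm w x
      linarith
    have hρg := hM g hgB hg0 hg1
    have hwg : w = ‖w‖ • g := by
      rw [hg, smul_smul, mul_inv_cancel₀ hn, one_smul]
    calc ρ.toFun w = ρ.toFun (‖w‖ • g) := by rw [← hwg]
      _ = ‖w‖ * ρ.toFun g := ρ.smul_eq _ g hgB
      _ ≤ ‖w‖ * M := by
          apply mul_le_mul_of_nonneg_left hρg (norm_nonneg w)
      _ = M * ‖w‖ := mul_comm _ _

/-- The key Lipschitz estimate for quasi-linear functionals on a singly generated
subalgebra. -/
lemma qlf_diff_bound (hB : IsSubalgS 𝔅) (h0 : (0 : X →ᵇ ℝ) ∈ 𝔅)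
    (habs : ∀ w ∈ 𝔅, |w| ∈ 𝔅) (ρ : QLF 𝔅) {M : ℝ} (hM0 : 0 ≤ M)
    (hM : ∀ f ∈ 𝔅, 0 ≤ f → f ≤ 1 → ρ.toFun f ≤ M) {k : X →ᵇ ℝ} (hk : k ∈ 𝔅)
    {u v : X →ᵇ ℝ} (hu : u ∈ sgen 𝔅 k) (hv : v ∈ sgen 𝔅 k) :
    |ρ.toFun u - ρ.toFun v| ≤ 2 * M * ‖u - v‖ := by
  set w : X →ᵇ ℝ := u - v with hwdef
  have hw : w ∈ sgen 𝔅 k := sgen_sub_mem hu hv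
  have hwB : w ∈ 𝔅 := sgen_subset hB hk hw
  have habsw : |w| ∈ sgen 𝔅 k :=
    comp_mem_sgen hB hk hw continuous_abs abs_zero (habs w hwB) (by funext x; simp)
  set wp : X →ᵇ ℝ := (2⁻¹ : ℝ) • (|w| + w) with hwp
  set wm : X →ᵇ ℝ := (2⁻¹ : ℝ) • (|w| - w) with hwm
  have hwpS : wp ∈ sgen 𝔅 k := sgen_smul _ (sgen_add habsw hw)
  have hwmS : wm ∈ sgen 𝔅 k := sgen_smul _ (sgen_sub_mem habsw hw)
  have hwpx : ∀ x, wp x = 2⁻¹ * (|w x| + w x) := fun x => rfl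
  have hwmx : ∀ x, wm x = 2⁻¹ * (|w x| - w x) := fun x => rfl
  have hwp0 : (0 : X →ᵇ ℝ) ≤ wp := by
    rw [bcf_le_iff]; intro x
    show (0 : X →ᵇ ℝ) x ≤ wp x
    rw [BoundedContinuousFunction.coe_zero, hwpx]
    simp only [Pi.zero_apply]
    have := neg_abs_le (w x); have := abs_nonneg (w x); linarith
  have hwm0 : (0 : X →ᵇ ℝ) ≤ wm := by
    rw [bcf_le_iff]; intro x
    show (0 : X →ᵇ ℝ) x ≤ wm x
    rw [BoundedContinuousFunction.coe_zero, hwmx]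
    simp only [Pi.zero_apply]
    have := le_abs_self (w x); linarith
  have hnp : ‖wp‖ ≤ ‖w‖ := by
    apply bcf_norm_le (norm_nonneg w)
    intro x
    rw [hwpx]
    have h1 := le_abs_self (w x); have h2 := neg_abs_le (w x)
    have h3 := bcf_abs_le_norm w x
    rw [abs_le]; constructor <;> [linarith [abs_nonneg (w x)]; linarith]
  have hnm : ‖wm‖ ≤ ‖w‖ := by
    apply bcf_norm_le (norm_nonneg w)
    intro x
    rw [hwmx]
    have h1 := le_abs_self (w x); have h2 := neg_abs_le (w x)
    have h3 := bcf_abs_le_norm w x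
    rw [abs_le]; constructor <;> [linarith [abs_nonneg (w x)]; linarith]
  have hρwp0 : 0 ≤ ρ.toFun wp := ρ.pos wp (sgen_subset hB hk hwpS) hwp0
  have hρwm0 : 0 ≤ ρ.toFun wm := ρ.pos wm (sgen_subset hB hk hwmS) hwm0
  have hρwp1 : ρ.toFun wp ≤ M * ‖w‖ :=
    (rho_nonneg_le ρ hM0 hM hB h0 (sgen_subset hB hk hwpS) hwp0).trans
      (by apply mul_le_mul_of_nonneg_left hnp hM0)
  have hρwm1 : ρ.toFun wm ≤ M * ‖w‖ :=
    (rho_nonneg_le ρ hM0 hM hB h0 (sgen_subset hB hk hwmS) hwm0).trans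
      (by apply mul_le_mul_of_nonneg_left hnm hM0)
  have hsplit : w = wp + (-1 : ℝ) • wm := by
    ext x
    show w x = wp x + (-1 : ℝ) * wm x
    rw [hwpx, hwmx]
    ring
  have hwS' : wp + (-1 : ℝ) • wm ∈ sgen 𝔅 k := sgen_add hwpS (sgen_smul _ hwmS)
  have hρw : ρ.toFun w = ρ.toFun wp - ρ.toFun wm := by
    rw [hsplit, ρ.add_eq k hk wp ((-1 : ℝ) • wm) hwpS (sgen_smul _ hwmS),
      ρ.smul_eq (-1 : ℝ) wm (sgen_subset hB hk hwmS)]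
    ring
  have huv : ρ.toFun u - ρ.toFun v = ρ.toFun w := by
    have hudecomp : u = v + w := by rw [hwdef]; ring
    rw [hudecomp, ρ.add_eq k hk v w hv hw]
    ring
  have hMw : 0 ≤ M * ‖w‖ := by positivity
  rw [huv, hρw, abs_le]
  constructor <;> [linarith; linarith]

end QLFBound

section Ext

open scoped ENNReal

/-- `M = ‖ρ‖` as a real number. -/
noncomputable def qM {𝔅 : Set (X →ᵇ ℝ)} (ρ : QLF 𝔅) : ℝ := (qnorm ρ).toReal

lemma qM_nonneg {𝔅 : Set (X →ᵇ ℝ)} (ρ : QLF 𝔅) : 0 ≤ qM ρ := ENNReal.toReal_nonneg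

lemma ofReal_le_qnorm {𝔅 : Set (X →ᵇ ℝ)} (ρ : QLF 𝔅) {f : X →ᵇ ℝ} (hf : f ∈ 𝔅)
    (h0 : 0 ≤ f) (h1 : f ≤ 1) : ENNReal.ofReal (ρ.toFun f) ≤ qnorm ρ := by
  unfold qnorm
  exact le_iSup₂ (f := fun g _ => ENNReal.ofReal (ρ.toFun g)) f ⟨hf, h0, h1⟩

lemma rho_le_qM {𝔅 : Set (X →ᵇ ℝ)} (ρ : QLF 𝔅) (hq : qnorm ρ ≠ ⊤) :
    ∀ f ∈ 𝔅, 0 ≤ f → f ≤ 1 → ρ.toFun f ≤ qM ρ := by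
  intro f hf h0 h1
  have hle := ofReal_le_qnorm ρ hf h0 h1
  have hpos : 0 ≤ ρ.toFun f := ρ.pos f hf h0
  calc ρ.toFun f = (ENNReal.ofReal (ρ.toFun f)).toReal := (ENNReal.toReal_ofReal hpos).symm
    _ ≤ qM ρ := ENNReal.toReal_mono hq hle

lemma eq_of_abs_le_lin {x C : ℝ} (hC : 0 ≤ C) (h : ∀ ε, 0 < ε → |x| ≤ C * ε) : x = 0 := by
  have key : ∀ ε, 0 < ε → |x| ≤ ε := by
    intro ε hε
    have h1 := h (ε / (C+1)) (by positivity)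
    have e : C * (ε / (C+1)) = ε * (C/(C+1)) := by ring
    have hle : C/(C+1) ≤ 1 := by
      rw [div_le_one (by positivity)]
      linarith
    nlinarith
  by_contra hx
  have h0 : 0 < |x| := abs_pos.mpr hx
  have := key (|x|/2) (by positivity)
  linarith

variable (ρ : QLF (CcS X))

lemma ext_step (hq : qnorm ρ ≠ ⊤) {f : X →ᵇ ℝ} (hf : f ∈ C0S X) {a b : ℝ}
    (hb : 0 < b) (hab : b ≤ a) :
    |ρ.toFun (trB a f) - ρ.toFun (trB b f)| ≤ 2 * qM ρ * (a - b) := by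
  have ha : 0 < a := lt_of_lt_of_le hb hab
  have hvCc : trB b f ∈ CcS X := trB_mem_CcS hf hb
  have huCc : trB a f ∈ CcS X := trB_mem_CcS hf ha
  have hucomp : ⇑(trB a f) = tr (a - b) ∘ ⇑(trB b f) := by
    funext x
    simp only [trB_apply, Function.comp_apply]
    rw [tr_tr (by linarith : (0:ℝ) ≤ a - b) hb.le, sub_add_cancel]
  have hu : trB a f ∈ sgen (CcS X) (trB b f) :=
    comp_mem_sgen isSubalg_CcS hvCc self_mem_sgen (tr_lipschitz _).continuous
      (tr_zero (by linarith)) huCc hucomp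
  have hbd := qlf_diff_bound isSubalg_CcS zero_mem_CcS (fun w hw => abs_mem_CcS hw) ρ
    (qM_nonneg ρ) (rho_le_qM ρ hq) hvCc hu self_mem_sgen
  refine hbd.trans ?_
  have hn := norm_trB_sub_trB (f := f) a b
  rw [abs_of_nonneg (by linarith : (0:ℝ) ≤ a - b)] at hn
  have h2M : (0:ℝ) ≤ 2 * qM ρ := by linarith [qM_nonneg ρ]
  exact mul_le_mul_of_nonneg_left hn h2M

lemma ext_pair (hq : qnorm ρ ≠ ⊤) {f : X →ᵇ ℝ} (hf : f ∈ C0S X) {a b : ℝ}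
    (ha : 0 < a) (hb : 0 < b) :
    |ρ.toFun (trB a f) - ρ.toFun (trB b f)| ≤ 2 * qM ρ * |a - b| := by
  rcases le_total b a with h | h
  · rw [show |a - b| = a - b from abs_of_nonneg (by linarith)]
    exact ext_step ρ hq hf hb h
  · rw [show |a - b| = -(a - b) from abs_of_nonpos (by linarith), abs_sub_comm]
    have h1 := ext_step ρ hq hf ha h
    convert h1 using 2
    ring

lemma ext_exists (hq : qnorm ρ ≠ ⊤) {f : X →ᵇ ℝ} (hf : f ∈ C0S X) :
    ∃ L : ℝ, Tendsto (fun n : ℕ => ρ.toFun (trB (1/((n:ℝ)+1)) f)) atTop (𝓝 L) := by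
  apply cauchySeq_tendsto_of_complete
  apply cauchySeq_of_le_tendsto_0 (b := fun N : ℕ => 2 * qM ρ * (1/((N:ℝ)+1)))
  · intro n m N hn hm
    have hpn : (0:ℝ) < 1/((n:ℝ)+1) := by positivity
    have hpm : (0:ℝ) < 1/((m:ℝ)+1) := by positivity
    rw [Real.dist_eq]
    refine (ext_pair ρ hq hf hpn hpm).trans ?_
    have h2M : (0:ℝ) ≤ 2 * qM ρ := by linarith [qM_nonneg ρ]
    apply mul_le_mul_of_nonneg_left _ h2M
    have h1 : 1/((n:ℝ)+1) ≤ 1/((N:ℝ)+1) := by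
      apply one_div_le_one_div_of_le (by positivity)
      have : (N:ℝ) ≤ (n:ℝ) := Nat.cast_le.mpr hn
      linarith
    have h2 : 1/((m:ℝ)+1) ≤ 1/((N:ℝ)+1) := by
      apply one_div_le_one_div_of_le (by positivity)
      have : (N:ℝ) ≤ (m:ℝ) := Nat.cast_le.mpr hm
      linarith
    rw [abs_le]
    constructor <;> [linarith; linarith]
  · have h1 := tendsto_one_div_add_atTop_nhds_zero_nat.const_mul (2 * qM ρ)
    simpa using h1

open Classical in
/-- The extension of `ρ` to `C₀(X)`. -/
noncomputable def extFun (ρ : QLF (CcS X)) (f : X →ᵇ ℝ) : ℝ :=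
  if hf : ∃ L : ℝ, Tendsto (fun n : ℕ => ρ.toFun (trB (1/((n:ℝ)+1)) f)) atTop (𝓝 L)
  then hf.choose else 0

lemma ext_tendsto (hq : qnorm ρ ≠ ⊤) {f : X →ᵇ ℝ} (hf : f ∈ C0S X) :
    Tendsto (fun n : ℕ => ρ.toFun (trB (1/((n:ℝ)+1)) f)) atTop (𝓝 (extFun ρ f)) := by
  have h := ext_exists ρ hq hf
  rw [extFun]
  rw [dif_pos h]
  exact h.choose_spec

lemma ext_key (hq : qnorm ρ ≠ ⊤) {f : X →ᵇ ℝ} (hf : f ∈ C0S X) {ε : ℝ} (hε : 0 < ε) :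
    |ρ.toFun (trB ε f) - extFun ρ f| ≤ 2 * qM ρ * ε := by
  have hten := ext_tendsto ρ hq hf
  have h1 : Tendsto (fun n : ℕ => |ρ.toFun (trB ε f) - ρ.toFun (trB (1/((n:ℝ)+1)) f)|)
      atTop (𝓝 |ρ.toFun (trB ε f) - extFun ρ f|) :=
    (tendsto_const_nhds.sub hten).abs
  have h2 : Tendsto (fun n : ℕ => 2 * qM ρ * (ε + 1/((n:ℝ)+1))) atTop
      (𝓝 (2 * qM ρ * ε)) := by
    have h3 := ((tendsto_const_nhds (x := ε) (f := (atTop : Filter ℕ))).add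
      tendsto_one_div_add_atTop_nhds_zero_nat).const_mul (2 * qM ρ)
    simpa using h3
  apply le_of_tendsto_of_tendsto' h1 h2
  intro n
  have hb : (0:ℝ) < 1/((n:ℝ)+1) := by positivity
  refine (ext_pair ρ hq hf hε hb).trans ?_
  have h2M : (0:ℝ) ≤ 2 * qM ρ := by linarith [qM_nonneg ρ]
  apply mul_le_mul_of_nonneg_left _ h2M
  rw [abs_le]
  constructor <;> [linarith; linarith]

end Ext

section ExtProps

variable (ρ : QLF (CcS X))

lemma ccs_diff_bound (hq : qnorm ρ ≠ ⊤) {k : X →ᵇ ℝ} (hk : k ∈ CcS X) {u v : X →ᵇ ℝ}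
    (hu : u ∈ sgen (CcS X) k) (hv : v ∈ sgen (CcS X) k) :
    |ρ.toFun u - ρ.toFun v| ≤ 2 * qM ρ * ‖u - v‖ :=
  qlf_diff_bound isSubalg_CcS zero_mem_CcS (fun _ hw => abs_mem_CcS hw) ρ
    (qM_nonneg ρ) (rho_le_qM ρ hq) hk hu hv

lemma ext_agree (hq : qnorm ρ ≠ ⊤) {f : X →ᵇ ℝ} (hf : f ∈ CcS X) :
    extFun ρ f = ρ.toFun f := by
  have hf0 : f ∈ C0S X := CcS_subset_C0S hf
  have key : ∀ ε, 0 < ε → |extFun ρ f - ρ.toFun f| ≤ (4 * qM ρ) * ε := by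
    intro ε hε
    have h1 := ext_key ρ hq hf0 hε
    have hu : trB ε f ∈ sgen (CcS X) f :=
      comp_mem_sgen isSubalg_CcS hf self_mem_sgen (tr_lipschitz ε).continuous
        (tr_zero hε.le) (trB_mem_CcS_of_CcS hf hε.le) rfl
    have h2 := ccs_diff_bound ρ hq hf hu self_mem_sgen
    have h3 : ‖trB ε f - f‖ ≤ ε := norm_trB_sub_self hε.le
    have h4 : |ρ.toFun (trB ε f) - ρ.toFun f| ≤ 2 * qM ρ * ε :=
      h2.trans (mul_le_mul_of_nonneg_left h3 (by linarith [qM_nonneg ρ]))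
    calc |extFun ρ f - ρ.toFun f|
        ≤ |extFun ρ f - ρ.toFun (trB ε f)| + |ρ.toFun (trB ε f) - ρ.toFun f| :=
          abs_sub_le _ _ _
      _ ≤ 2 * qM ρ * ε + 2 * qM ρ * ε := by
          rw [abs_sub_comm]
          exact add_le_add h1 h4
      _ = (4 * qM ρ) * ε := by ring
  have := eq_of_abs_le_lin (by linarith [qM_nonneg ρ]) key
  exact sub_eq_zero.mp this

lemma ext_zero (hq : qnorm ρ ≠ ⊤) : extFun ρ 0 = 0 := by
  rw [ext_agree ρ hq zero_mem_CcS, rho_zero ρ zero_mem_CcS]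

lemma trB_nonneg {f : X →ᵇ ℝ} {ε : ℝ} (hε : 0 ≤ ε) (h0 : 0 ≤ f) : 0 ≤ trB ε f := by
  rw [bcf_le_iff]
  intro x
  have h1 : (0:ℝ) ≤ f x := by simpa using (bcf_le_iff.mp h0) x
  show (0 : X →ᵇ ℝ) x ≤ trB ε f x
  rw [BoundedContinuousFunction.coe_zero]
  simpa using tr_nonneg hε h1

lemma trB_le_one {f : X →ᵇ ℝ} {ε : ℝ} (hε : 0 ≤ ε) (h0 : 0 ≤ f) (h1 : f ≤ 1) :
    trB ε f ≤ 1 := by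
  rw [bcf_le_iff]
  intro x
  have hx0 : (0:ℝ) ≤ f x := by simpa using (bcf_le_iff.mp h0) x
  have hx1 : f x ≤ 1 := by simpa using (bcf_le_iff.mp h1) x
  show trB ε f x ≤ (1 : X →ᵇ ℝ) x
  rw [BoundedContinuousFunction.coe_one]
  simp only [trB_apply, Pi.one_apply]
  exact (tr_le_self hε hx0).trans hx1

lemma ext_pos (hq : qnorm ρ ≠ ⊤) {f : X →ᵇ ℝ} (hf : f ∈ C0S X) (h0 : 0 ≤ f) :
    0 ≤ extFun ρ f := by
  apply ge_of_tendsto (ext_tendsto ρ hq hf)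
  apply Filter.Eventually.of_forall
  intro n
  have hb : (0:ℝ) < 1/((n:ℝ)+1) := by positivity
  exact ρ.pos _ (trB_mem_CcS hf hb) (trB_nonneg hb.le h0)

lemma ext_le_qM (hq : qnorm ρ ≠ ⊤) {f : X →ᵇ ℝ} (hf : f ∈ C0S X) (h0 : 0 ≤ f)
    (h1 : f ≤ 1) : extFun ρ f ≤ qM ρ := by
  apply le_of_tendsto (ext_tendsto ρ hq hf)
  apply Filter.Eventually.of_forall
  intro n
  have hb : (0:ℝ) < 1/((n:ℝ)+1) := by positivity
  exact rho_le_qM ρ hq _ (trB_mem_CcS hf hb) (trB_nonneg hb.le h0) (trB_le_one hb.le h0 h1)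

lemma ext_smul (hq : qnorm ρ ≠ ⊤) (a : ℝ) {f : X →ᵇ ℝ} (hf : f ∈ C0S X) :
    extFun ρ (a • f) = a * extFun ρ f := by
  by_cases ha : a = 0
  · subst ha
    rw [zero_smul, ext_zero ρ hq, zero_mul]
  have ha' : 0 < |a| := abs_pos.mpr ha
  have haf : a • f ∈ C0S X := isSubalg_C0S.2.2 a f hf
  have key : ∀ ε, 0 < ε → |extFun ρ (a • f) - a * extFun ρ f| ≤ (8 * qM ρ) * ε := by
    intro ε hε
    set e' : ℝ := ε / |a| with he'def
    have he' : 0 < e' := by positivity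
    have hae : |a| * e' = ε := by
      rw [he'def, mul_div_cancel₀ _ (ne_of_gt ha')]
    set k : X →ᵇ ℝ := trB e' f with hkdef
    have hkCc : k ∈ CcS X := trB_mem_CcS hf he'
    have hu : trB ε (a • f) ∈ sgen (CcS X) k := by
      apply vanish_mem_sgen hf he' le_rfl (φ := fun t => tr ε (a * t))
        ((tr_lipschitz ε).continuous.comp (continuous_const.mul continuous_id))
        (fun t ht => ?_) (trB_mem_CcS haf hε) (fun x => rfl)
      show tr ε (a * t) = 0
      apply tr_eq_zero
      rw [abs_mul]
      calc |a| * |t| ≤ |a| * e' := mul_le_mul_of_nonneg_left ht ha'.le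
        _ = ε := hae
    have hv' : a • k ∈ sgen (CcS X) k := sgen_smul a self_mem_sgen
    have hd : ‖trB ε (a • f) - a • k‖ ≤ 2 * ε := by
      apply bcf_norm_le (by linarith)
      intro x
      have e1 : (trB ε (a • f) - a • k) x = tr ε (a * f x) - a * tr e' (f x) := rfl
      rw [e1]
      have b1 : |tr ε (a * f x) - a * f x| ≤ ε := abs_tr_sub_self hε.le _
      have b2 : |a * f x - a * tr e' (f x)| ≤ ε := by
        rw [← mul_sub, abs_mul]
        calc |a| * |f x - tr e' (f x)| ≤ |a| * e' := by
              apply mul_le_mul_of_nonneg_left _ ha'.le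
              rw [abs_sub_comm]
              exact abs_tr_sub_self he'.le _
          _ = ε := hae
      calc |tr ε (a * f x) - a * tr e' (f x)|
          ≤ |tr ε (a * f x) - a * f x| + |a * f x - a * tr e' (f x)| := abs_sub_le _ _ _
        _ ≤ 2 * ε := by linarith
    have hb2 := (ccs_diff_bound ρ hq hkCc hu hv').trans
      (mul_le_mul_of_nonneg_left hd (by linarith [qM_nonneg ρ]))
    have hsm : ρ.toFun (a • k) = a * ρ.toFun k := ρ.smul_eq a k hkCc
    have h1 := ext_key ρ hq haf hε
    have h2 := ext_key ρ hq hf he'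
    have h2' : |a * ρ.toFun k - a * extFun ρ f| ≤ 2 * qM ρ * ε := by
      rw [← mul_sub, abs_mul]
      calc |a| * |ρ.toFun k - extFun ρ f| ≤ |a| * (2 * qM ρ * e') :=
            mul_le_mul_of_nonneg_left h2 ha'.le
        _ = 2 * qM ρ * ε := by rw [← hae]; ring
    rw [hsm] at hb2
    calc |extFun ρ (a • f) - a * extFun ρ f|
        ≤ |extFun ρ (a • f) - ρ.toFun (trB ε (a • f))|
          + (|ρ.toFun (trB ε (a • f)) - a * ρ.toFun k|
            + |a * ρ.toFun k - a * extFun ρ f|) := by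
          refine (abs_sub_le _ (ρ.toFun (trB ε (a • f))) _).trans ?_
          exact add_le_add (le_refl _) (abs_sub_le _ (a * ρ.toFun k) _)
      _ ≤ 2 * qM ρ * ε + (2 * qM ρ * (2 * ε) + 2 * qM ρ * ε) := by
          rw [abs_sub_comm]
          exact add_le_add h1 (add_le_add hb2 h2')
      _ = (8 * qM ρ) * ε := by ring
  have := eq_of_abs_le_lin (by linarith [qM_nonneg ρ]) key
  exact sub_eq_zero.mp this

end ExtProps

section ExtAdd

variable (ρ : QLF (CcS X))

lemma ext_add (hq : qnorm ρ ≠ ⊤) {h : X →ᵇ ℝ} (hh : h ∈ C0S X) {f g : X →ᵇ ℝ}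
    (hf : f ∈ sgen (C0S X) h) (hg : g ∈ sgen (C0S X) h) :
    extFun ρ (f + g) = extFun ρ f + extFun ρ g := by
  have hfC : f ∈ C0S X := sgen_subset isSubalg_C0S hh hf
  have hgC : g ∈ C0S X := sgen_subset isSubalg_C0S hh hg
  have hs : f + g ∈ sgen (C0S X) h := sgen_add hf hg
  have hsC : f + g ∈ C0S X := sgen_subset isSubalg_C0S hh hs
  have key : ∀ ε, 0 < ε → |extFun ρ (f + g) - (extFun ρ f + extFun ρ g)|
      ≤ (12 * qM ρ) * ε := by
    intro ε hε
    obtain ⟨δ1, hδ1, hb1⟩ := small_of_mem_sgen hh hf ε hε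
    obtain ⟨δ2, hδ2, hb2⟩ := small_of_mem_sgen hh hg ε hε
    obtain ⟨δ3, hδ3, hb3⟩ := small_of_mem_sgen hh hs ε hε
    set δ : ℝ := min δ1 (min δ2 δ3) / 2 with hδdef
    have hδ : 0 < δ := by
      apply div_pos _ (by norm_num)
      exact lt_min hδ1 (lt_min hδ2 hδ3)
    have h2δ1 : 2 * δ ≤ δ1 := by
      rw [hδdef]
      have := min_le_left δ1 (min δ2 δ3)
      linarith
    have h2δ2 : 2 * δ ≤ δ2 := by
      rw [hδdef]
      have := (min_le_right δ1 (min δ2 δ3)).trans (min_le_left δ2 δ3)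
      linarith
    have h2δ3 : 2 * δ ≤ δ3 := by
      rw [hδdef]
      have := (min_le_right δ1 (min δ2 δ3)).trans (min_le_right δ2 δ3)
      linarith
    set tb : X →ᵇ ℝ := trB δ h with htbdef
    have htbCc : tb ∈ CcS X := trB_mem_CcS hh hδ
    set c : X →ᵇ ℝ := cutB δ h with hcdef
    have hc : c ∈ sgen (CcS X) tb := cutB_mem_sgen hh hδ
    have hcabs : ∀ x, |c x| ≤ 1 := by
      intro x
      rw [hcdef, cutB_apply, abs_of_nonneg (cut_nonneg hδ _)]
      exact cut_le_one hδ _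
    -- generic facts, for u ∈ {f, g, f+g}
    have main : ∀ u : X →ᵇ ℝ, u ∈ sgen (C0S X) h → u ∈ C0S X →
        (∀ x, |h x| ≤ 2*δ → |u x| ≤ ε) →
        trB ε u ∈ sgen (CcS X) tb ∧ u * c ∈ sgen (CcS X) tb ∧
          ‖trB ε u - u * c‖ ≤ ε := by
      intro u hu huC hbu
      have hTu' : trB ε u ∈ sgen (C0S X) h :=
        comp_mem_sgen isSubalg_C0S hh hu (tr_lipschitz ε).continuous (tr_zero hε.le)
          (trB_mem_C0S huC hε.le) rfl
      have hTuc : trB ε u * c ∈ sgen (CcS X) tb := mul_mem_sgen_tr hh hδ _ hTu' c hc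
      have hfceq : trB ε u * c = trB ε u := by
        ext x
        rw [BoundedContinuousFunction.mul_apply, trB_apply, hcdef, cutB_apply]
        by_cases hx : |h x| ≤ 2*δ
        · rw [tr_eq_zero (hbu x hx), zero_mul]
        · rw [cut_eq_one hδ (by push_neg at hx; linarith), mul_one]
      have hTu : trB ε u ∈ sgen (CcS X) tb := by
        rw [← hfceq]
        exact hTuc
      have huc : u * c ∈ sgen (CcS X) tb := mul_mem_sgen_tr hh hδ u hu c hc
      refine ⟨hTu, huc, ?_⟩
      apply bcf_norm_le hε.le
      intro x
      have e1 : (trB ε u - u * c) x = tr ε (u x) - u x * c x := rfl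
      rw [e1]
      by_cases hx : |h x| ≤ 2*δ
      · have hux := hbu x hx
        rw [tr_eq_zero hux]
        rw [zero_sub, abs_neg, abs_mul]
        calc |u x| * |c x| ≤ ε * 1 :=
              mul_le_mul hux (hcabs x) (abs_nonneg _) hε.le
          _ = ε := mul_one ε
      · rw [hcdef, cutB_apply, cut_eq_one hδ (by push_neg at hx; linarith), mul_one]
        exact abs_tr_sub_self hε.le _
    obtain ⟨hTf, hFc, hnf⟩ := main f hf hfC (fun x hx => hb1 x (hx.trans h2δ1))
    obtain ⟨hTg, hGc, hng⟩ := main g hg hgC (fun x hx => hb2 x (hx.trans h2δ2))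
    obtain ⟨hTs, hSc, hns⟩ := main (f + g) hs hsC (fun x hx => hb3 x (hx.trans h2δ3))
    have hadd : ρ.toFun ((f + g) * c) = ρ.toFun (f * c) + ρ.toFun (g * c) := by
      rw [add_mul]
      exact ρ.add_eq tb htbCc _ _ hFc hGc
    have h2M : (0:ℝ) ≤ 2 * qM ρ := by linarith [qM_nonneg ρ]
    have d1 := (ccs_diff_bound ρ hq htbCc hTf hFc).trans
      (mul_le_mul_of_nonneg_left hnf h2M)
    have d2 := (ccs_diff_bound ρ hq htbCc hTg hGc).trans
      (mul_le_mul_of_nonneg_left hng h2M)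
    have d3 := (ccs_diff_bound ρ hq htbCc hTs hSc).trans
      (mul_le_mul_of_nonneg_left hns h2M)
    have e1 := ext_key ρ hq hfC hε
    have e2 := ext_key ρ hq hgC hε
    have e3 := ext_key ρ hq hsC hε
    obtain ⟨d1l, d1r⟩ := abs_le.mp d1
    obtain ⟨d2l, d2r⟩ := abs_le.mp d2
    obtain ⟨d3l, d3r⟩ := abs_le.mp d3
    obtain ⟨e1l, e1r⟩ := abs_le.mp e1
    obtain ⟨e2l, e2r⟩ := abs_le.mp e2
    obtain ⟨e3l, e3r⟩ := abs_le.mp e3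
    rw [abs_le]
    constructor <;> [linarith; linarith]
  have := eq_of_abs_le_lin (by linarith [qM_nonneg ρ]) key
  exact sub_eq_zero.mp this

end ExtAdd

section Unique

lemma zero_mem_C0S : (0 : X →ᵇ ℝ) ∈ C0S X := CcS_subset_C0S zero_mem_CcS

lemma c0s_diff_bound (σ : QLF (C0S X)) (hq : qnorm σ ≠ ⊤) {k : X →ᵇ ℝ} (hk : k ∈ C0S X)
    {u v : X →ᵇ ℝ} (hu : u ∈ sgen (C0S X) k) (hv : v ∈ sgen (C0S X) k) :
    |σ.toFun u - σ.toFun v| ≤ 2 * qM σ * ‖u - v‖ :=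
  qlf_diff_bound isSubalg_C0S zero_mem_C0S (fun _ hw => abs_mem_C0S hw) σ
    (qM_nonneg σ) (rho_le_qM σ hq) hk hu hv

/-- Two bounded quasi-linear functionals on `C₀(X)` agreeing on `C_c(X)` agree. -/
lemma qlf_unique (σ₁ σ₂ : QLF (C0S X)) (h₁ : qnorm σ₁ ≠ ⊤) (h₂ : qnorm σ₂ ≠ ⊤)
    (hagree : ∀ f ∈ CcS X, σ₁.toFun f = σ₂.toFun f) {f : X →ᵇ ℝ} (hf : f ∈ C0S X) :
    σ₁.toFun f = σ₂.toFun f := by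
  have key : ∀ ε, 0 < ε → |σ₁.toFun f - σ₂.toFun f|
      ≤ (2 * qM σ₁ + 2 * qM σ₂) * ε := by
    intro ε hε
    have hu : trB ε f ∈ sgen (C0S X) f :=
      comp_mem_sgen isSubalg_C0S hf self_mem_sgen (tr_lipschitz ε).continuous
        (tr_zero hε.le) (trB_mem_C0S hf hε.le) rfl
    have hn : ‖f - trB ε f‖ ≤ ε := by
      rw [norm_sub_rev]
      exact norm_trB_sub_self hε.le
    have b₁ := (c0s_diff_bound σ₁ h₁ hf self_mem_sgen hu).trans
      (mul_le_mul_of_nonneg_left hn (by linarith [qM_nonneg σ₁]))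
    have b₂ := (c0s_diff_bound σ₂ h₂ hf self_mem_sgen hu).trans
      (mul_le_mul_of_nonneg_left hn (by linarith [qM_nonneg σ₂]))
    have hT : trB ε f ∈ CcS X := trB_mem_CcS hf hε
    have heq : σ₁.toFun (trB ε f) = σ₂.toFun (trB ε f) := hagree _ hT
    obtain ⟨l1, r1⟩ := abs_le.mp b₁
    obtain ⟨l2, r2⟩ := abs_le.mp b₂
    rw [abs_le]
    constructor <;> [nlinarith [qM_nonneg σ₁, qM_nonneg σ₂];
      nlinarith [qM_nonneg σ₁, qM_nonneg σ₂]]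
  have hC : (0:ℝ) ≤ 2 * qM σ₁ + 2 * qM σ₂ := by linarith [qM_nonneg σ₁, qM_nonneg σ₂]
  exact sub_eq_zero.mp (eq_of_abs_le_lin hC key)

end Unique

section Assemble

open scoped ENNReal

/-- The extension, as a quasi-linear functional on `C₀(X)`. -/
noncomputable def extQLF (ρ : QLF (CcS X)) (hq : qnorm ρ ≠ ⊤) : QLF (C0S X) :=
  ⟨⟨extFun ρ, fun a f hf => ext_smul ρ hq a hf,
    fun h hh f g hf hg => ext_add ρ hq hh hf hg⟩,
    fun f hf h0 => ext_pos ρ hq hf h0⟩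

lemma qnorm_le' {𝔅 : Set (X →ᵇ ℝ)} (ρ : QLF 𝔅) (C : ℝ≥0∞)
    (h : ∀ f ∈ 𝔅, 0 ≤ f → f ≤ 1 → ENNReal.ofReal (ρ.toFun f) ≤ C) : qnorm ρ ≤ C := by
  unfold qnorm
  apply iSup₂_le
  rintro f ⟨hf, h0, h1⟩
  exact h f hf h0 h1

lemma qnorm_extQLF (ρ : QLF (CcS X)) (hq : qnorm ρ ≠ ⊤) :
    qnorm (extQLF ρ hq) = qnorm ρ := by
  apply le_antisymm
  · apply qnorm_le'
    intro f hf h0 h1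
    have hb : (extQLF ρ hq).toFun f ≤ qM ρ := ext_le_qM ρ hq hf h0 h1
    calc ENNReal.ofReal ((extQLF ρ hq).toFun f) ≤ ENNReal.ofReal (qM ρ) :=
          ENNReal.ofReal_le_ofReal hb
      _ = qnorm ρ := ENNReal.ofReal_toReal hq
  · apply qnorm_le'
    intro f hf h0 h1
    have : ρ.toFun f = (extQLF ρ hq).toFun f := (ext_agree ρ hq hf).symm
    rw [this]
    exact ofReal_le_qnorm (extQLF ρ hq) (CcS_subset_C0S hf) h0 h1

/-- `sgen (CcS X) h ⊆ sgen (C0S X) h`. -/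
lemma sgen_ccs_subset {h : X →ᵇ ℝ} (hh : h ∈ CcS X) :
    sgen (CcS X) h ⊆ sgen (C0S X) h := by
  intro f hf
  rw [sgen_eq, mem_sInter]
  intro S hS
  have hι : Continuous (fun x : ↥(CcS X) => (⟨(x : X →ᵇ ℝ), CcS_subset_C0S x.2⟩ : ↥(C0S X))) :=
    Continuous.subtype_mk continuous_subtype_val _
  have hmem : S ∩ CcS X ∈ sfam (CcS X) h := by
    refine ⟨inter_subset_right, ⟨hS.2.1, hh⟩, ?_, ?_, ?_, ?_⟩
    · rintro u v ⟨hu1, hu2⟩ ⟨hv1, hv2⟩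
      exact ⟨hS.2.2.1 u v hu1 hv1, isSubalg_CcS.1 u v hu2 hv2⟩
    · rintro u v ⟨hu1, hu2⟩ ⟨hv1, hv2⟩
      exact ⟨hS.2.2.2.1 u v hu1 hv1, isSubalg_CcS.2.1 u v hu2 hv2⟩
    · rintro a u ⟨hu1, hu2⟩
      exact ⟨hS.2.2.2.2.1 a u hu1, isSubalg_CcS.2.2 a u hu2⟩
    · have heq : {x : ↥(CcS X) | (x : X →ᵇ ℝ) ∈ S ∩ CcS X} =
          (fun x : ↥(CcS X) => (⟨(x : X →ᵇ ℝ), CcS_subset_C0S x.2⟩ : ↥(C0S X))) ⁻¹'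
            {y : ↥(C0S X) | (y : X →ᵇ ℝ) ∈ S} := by
        ext x
        simp [x.2]
      rw [heq]
      exact (hS.2.2.2.2.2).preimage hι
  exact ((sgen_subset_of_mem hmem) hf).1

end Assemble


end QLFExtAux

/-- (I) every bounded quasi-linear functional on `C_c(X)` extends uniquely
(among bounded quasi-linear functionals) to a bounded quasi-linear functional on `C₀(X)`
with the same norm; (II) every bounded quasi-linear functional on `C₀(X)` is the unique
bounded extension of its restriction to `C_c(X)`. -/
theorem qlf_extension {X : Type u} [TopologicalSpace X]
    [LocallyCompactSpace X] [T2Space X] [ConnectedSpace X] :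
    (∀ ρ : QLF (CcS X), qnorm ρ ≠ ∞ →
      ∃ σ : QLF (C0S X), (∀ f ∈ CcS X, σ.toFun f = ρ.toFun f) ∧ qnorm σ = qnorm ρ ∧
        (∀ σ' : QLF (C0S X), qnorm σ' ≠ ∞ → (∀ f ∈ CcS X, σ'.toFun f = ρ.toFun f) →
          ∀ f ∈ C0S X, σ'.toFun f = σ.toFun f)) ∧
    (∀ σ : QLF (C0S X), qnorm σ ≠ ∞ →
      ∃ ρ : QLF (CcS X), qnorm ρ ≠ ∞ ∧ (∀ f ∈ CcS X, ρ.toFun f = σ.toFun f) ∧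
        (∀ σ' : QLF (C0S X), qnorm σ' ≠ ∞ → (∀ f ∈ CcS X, σ'.toFun f = σ.toFun f) →
          ∀ f ∈ C0S X, σ'.toFun f = σ.toFun f)) := by
  constructor
  · intro ρ hq
    refine ⟨QLFExtAux.extQLF ρ hq, fun f hf => QLFExtAux.ext_agree ρ hq hf,
      QLFExtAux.qnorm_extQLF ρ hq, ?_⟩
    intro σ' h1 h2 f hf
    apply QLFExtAux.qlf_unique σ' (QLFExtAux.extQLF ρ hq) h1
      (by rw [QLFExtAux.qnorm_extQLF]; exact hq) ?_ hf
    intro u hu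
    rw [h2 u hu]
    exact (QLFExtAux.ext_agree ρ hq hu).symm
  · intro σ hq
    refine ⟨⟨⟨σ.toFun, fun a f hf => σ.smul_eq a f (QLFExtAux.CcS_subset_C0S hf),
      fun h hh f g hf hg => σ.add_eq h (QLFExtAux.CcS_subset_C0S hh) f g
        (QLFExtAux.sgen_ccs_subset hh hf) (QLFExtAux.sgen_ccs_subset hh hg)⟩,
      fun f hf h0 => σ.pos f (QLFExtAux.CcS_subset_C0S hf) h0⟩, ?_, fun f _ => rfl, ?_⟩
    · apply ne_top_of_le_ne_top hq
      apply QLFExtAux.qnorm_le'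
      intro f hf h0 h1
      exact QLFExtAux.ofReal_le_qnorm σ (QLFExtAux.CcS_subset_C0S hf) h0 h1
    · intro σ' h1 h2 f hf
      exact QLFExtAux.qlf_unique σ' σ h1 hq h2 hf
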